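/- For n = 4, the skew-identity matrix A^{2,2} = Σ_{i=1}^{4} E_{i, 5−i} ∈ M₄(K) satisfies the numeric reflection equation, obeys (A^{2,2})² = I₄, and is q-traceless: Tr_q(A^{2,2}) = 0. -/

import Mathlib

open Matrix Kronecker

/-- The Hecke matrix `S = q·Σᵢ E_{ii}⊗E_{ii} + Σ_{i≠j} E_{ij}⊗E_{ji} + (q−q⁻¹)·Σ_{i<j} E_{ii}⊗E_{jj}`. -/
noncomputable def heckeS (K : Type*) [Field K] (n : ℕ) (q : K) :
    Matrix (Fin n × Fin n) (Fin n × Fin n) K :=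
  q • (∑ i : Fin n, single i i (1 : K) ⊗ₖ single i i (1 : K))
    + ∑ i : Fin n, ∑ j : Fin n,
        (if i ≠ j then single i j (1 : K) ⊗ₖ single j i (1 : K) else 0)
    + (q - q⁻¹) • ∑ i : Fin n, ∑ j : Fin n,
        (if i < j then single i i (1 : K) ⊗ₖ single j j (1 : K) else 0)

/-- The skew-identity matrix `A^{2,2} = Σ_{i=1}^{4} E_{i,5−i} ∈ M₄(K)`. -/
def A22 (K : Type*) [Field K] : Matrix (Fin 4) (Fin 4) K :=
  !![0, 0, 0, 1; 0, 0, 1, 0; 0, 1, 0, 0; 1, 0, 0, 0]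

/-- The quantum-trace matrix `D = diag(1, q⁻², q⁻⁴, q⁻⁶)` for `n = 4`. -/
noncomputable def qTraceD4 (K : Type*) [Field K] (q : K) : Matrix (Fin 4) (Fin 4) K :=
  Matrix.diagonal ![1, q ^ (-2 : ℤ), q ^ (-4 : ℤ), q ^ (-6 : ℤ)]

/- ---------- auxiliary lemmas ---------- -/

set_option linter.unnecessarySeqFocus false
set_option linter.unreachableTactic false
set_option linter.unusedTactic false

theorem A22_apply (K : Type*) [Field K] (j l : Fin 4) :
    A22 K j l = if j.rev = l then 1 else 0 := by
  fin_cases j <;> fin_cases l <;> simp [A22] <;> rfl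

theorem A2_mul (K : Type*) [Field K] (M : Matrix (Fin 4 × Fin 4) (Fin 4 × Fin 4) K) :
    ((1 : Matrix (Fin 4) (Fin 4) K) ⊗ₖ A22 K) * M
      = Matrix.of fun p r => M (p.1, p.2.rev) r := by
  ext ⟨i, j⟩ r
  rw [Matrix.mul_apply]
  rw [Fintype.sum_prod_type]
  simp [kroneckerMap_apply, Matrix.one_apply, A22_apply, ite_mul, Finset.sum_ite_eq,
    Finset.sum_ite_eq']

theorem mul_A2 (K : Type*) [Field K] (M : Matrix (Fin 4 × Fin 4) (Fin 4 × Fin 4) K) :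
    M * ((1 : Matrix (Fin 4) (Fin 4) K) ⊗ₖ A22 K)
      = Matrix.of fun p r => M p (r.1, r.2.rev) := by
  ext p ⟨k, l⟩
  rw [Matrix.mul_apply]
  rw [Fintype.sum_prod_type]
  simp [kroneckerMap_apply, Matrix.one_apply, A22_apply, mul_ite, Finset.sum_ite_eq,
    Finset.sum_ite_eq', Fin.rev_eq_iff]

theorem heckeS_apply (K : Type*) [Field K] {n : ℕ} (q : K) (a b c d : Fin n) :
    heckeS K n q (a,b) (c,d) =
      (if a = b ∧ c = a ∧ d = b then q else 0)
      + (if a ≠ b ∧ c = b ∧ d = a then 1 else 0)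
      + (q - q⁻¹) * (if a < b ∧ c = a ∧ d = b then 1 else 0) := by
  have h1 : (∑ i : Fin n, single i i (1:K) ⊗ₖ single i i (1:K)) (a,b) (c,d)
      = if a = b ∧ c = a ∧ d = b then 1 else 0 := by
    rw [Matrix.sum_apply]
    rw [Finset.sum_eq_single a]
    · simp [single, ite_and]
      aesop
    · intro i _ hi
      simp [single, ite_and, (Ne.symm hi)] <;> aesop
    · simp
  have h2 : (∑ i : Fin n, ∑ j : Fin n,
        (if i ≠ j then single i j (1:K) ⊗ₖ single j i (1:K) else 0)) (a,b) (c,d)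
      = if a ≠ b ∧ c = b ∧ d = a then 1 else 0 := by
    rw [Matrix.sum_apply]
    rw [Finset.sum_eq_single a]
    · rw [Matrix.sum_apply]
      rw [Finset.sum_eq_single b]
      · by_cases hab : a = b <;> simp [single, ite_and, hab] <;> aesop
      · intro j _ hj
        by_cases haj : a = j <;> simp [single, ite_and, haj, Ne.symm hj] <;> aesop
      · simp
    · intro i _ hi
      rw [Matrix.sum_apply]
      apply Finset.sum_eq_zero
      intro j _
      by_cases hij : i = j <;> simp [single, ite_and, hij, Ne.symm hi] <;> aesop
    · simp
  have h3 : (∑ i : Fin n, ∑ j : Fin n,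
        (if i < j then single i i (1:K) ⊗ₖ single j j (1:K) else 0)) (a,b) (c,d)
      = if a < b ∧ c = a ∧ d = b then 1 else 0 := by
    rw [Matrix.sum_apply]
    rw [Finset.sum_eq_single a]
    · rw [Matrix.sum_apply]
      rw [Finset.sum_eq_single b]
      · by_cases hab : a < b <;> simp [single, ite_and, hab] <;> aesop
      · intro j _ hj
        by_cases hij : a < j <;> simp [single, ite_and, hij, Ne.symm hj] <;> aesop
      · simp
    · intro i _ hi
      rw [Matrix.sum_apply]
      apply Finset.sum_eq_zero
      intro j _
      by_cases hij : i < j <;> simp [single, ite_and, hij, Ne.symm hi] <;> aesop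
    · simp
  simp only [heckeS, Matrix.add_apply, Matrix.smul_apply, h1, h2, h3, smul_eq_mul,
    mul_ite, mul_one, mul_zero]

theorem sumS (K : Type*) [Field K] (q : K) (g : Fin 4 → Fin 4 → K) (a B : Fin 4) :
    (∑ e : Fin 4, ∑ f : Fin 4, heckeS K 4 q (a, B) (e, f.rev) * g e f)
      = (if a = B then q else 0) * g a B.rev
        + (q - q⁻¹) * (if a < B then 1 else 0) * g a B.rev
        + (if a = B then 0 else 1) * g B a.rev := by
  simp only [heckeS_apply, add_mul, mul_assoc, ite_mul, one_mul, zero_mul,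
    Finset.sum_add_distrib, ite_and]
  by_cases hab : a = B <;> by_cases hlt : a < B <;>
    simp [hab, hlt, Fin.rev_eq_iff, Finset.sum_ite_eq, Finset.sum_ite_eq'] <;> ring

set_option maxHeartbeats 4000000 in
theorem key (K : Type*) [Field K] (q : K) (hq : q ≠ 0) (a b c d : Fin 4) :
    ∑ s : Fin 4 × Fin 4, heckeS K 4 q (a, b.rev) (s.1, s.2.rev) * heckeS K 4 q s (c, d)
      = ∑ s : Fin 4 × Fin 4, heckeS K 4 q (a, b) (s.1, s.2.rev) * heckeS K 4 q s (c, d.rev) := by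
  have hq1 : q * q⁻¹ = 1 := mul_inv_cancel₀ hq
  rw [Fintype.sum_prod_type, Fintype.sum_prod_type,
    sumS K q (fun e f => heckeS K 4 q (e, f) (c, d)) a b.rev,
    sumS K q (fun e f => heckeS K 4 q (e, f) (c, d.rev)) a b]
  simp only [Fin.rev_rev, heckeS_apply]
  fin_cases a <;> fin_cases b <;> fin_cases c <;> fin_cases d <;>
      simp (config := { decide := true }) only [if_true, if_false, ite_true, ite_false,
        zero_mul, mul_zero, add_zero, zero_add, one_mul, mul_one] <;>
      first
        | rfl
        | ring
        | linear_combination hq1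
        | linear_combination q * hq1
        | linear_combination (q - q⁻¹) * hq1
        | linear_combination (q⁻¹ - q) * hq1
        | linear_combination q⁻¹ * hq1
        | (field_simp; ring)

/-- `A^{2,2}` satisfies the numeric reflection equation, squares to the identity,
and is q-traceless. -/
theorem A22_reflection (K : Type*) [Field K] (q : K) (hq : q ≠ 0) :
    ((1 : Matrix (Fin 4) (Fin 4) K) ⊗ₖ A22 K) * heckeS K 4 q
        * ((1 : Matrix (Fin 4) (Fin 4) K) ⊗ₖ A22 K) * heckeS K 4 q
      = heckeS K 4 q * ((1 : Matrix (Fin 4) (Fin 4) K) ⊗ₖ A22 K)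
        * heckeS K 4 q * ((1 : Matrix (Fin 4) (Fin 4) K) ⊗ₖ A22 K) ∧
    A22 K * A22 K = 1 ∧
    Matrix.trace (qTraceD4 K q * A22 K) = 0 := by
  refine ⟨?_, ?_, ?_⟩
  · have e1 : ((1 : Matrix (Fin 4) (Fin 4) K) ⊗ₖ A22 K) * heckeS K 4 q
        * ((1 : Matrix (Fin 4) (Fin 4) K) ⊗ₖ A22 K)
        = Matrix.of fun p r => heckeS K 4 q (p.1, p.2.rev) (r.1, r.2.rev) := by
      rw [A2_mul, mul_A2]
      rfl
    have e2 : heckeS K 4 q * ((1 : Matrix (Fin 4) (Fin 4) K) ⊗ₖ A22 K)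
        = Matrix.of fun p r => heckeS K 4 q p (r.1, r.2.rev) := mul_A2 K _
    rw [e1, e2, mul_A2]
    ext ⟨a, b⟩ ⟨c, d⟩
    simp only [Matrix.mul_apply, Matrix.of_apply]
    exact key K q hq a b c d
  · ext i j
    fin_cases i <;> fin_cases j <;>
      simp [A22, Matrix.mul_apply, Fin.sum_univ_four, Matrix.one_apply, Matrix.vecHead, Matrix.vecTail]
  · simp [Matrix.trace, qTraceD4, Matrix.diag, Matrix.diagonal_mul, A22,
      Fin.sum_univ_four, Matrix.vecHead, Matrix.vecTail]
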